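/- Every complete p-uniformly convex metric space X with parameter k > 0 has property (P): given two bounded sequences (x_n) and (z_n) in X, there exists a point z ∈ ⋂_{n ≥ 1} cov({z_j : j ≥ n}) such that limsup_{n → ∞} d(z, x_n) ≤ limsup_{j → ∞} limsup_{n → ∞} d(z_j, x_n). -/

import Mathlib

open Filter Topology

lemma aux_rpow_le {p a c : ℝ} (hp : 0 < p) (ha : 0 ≤ a) (h : a ^ p ≤ c) : a ≤ c ^ p⁻¹ := by
  have := Real.rpow_le_rpow (Real.rpow_nonneg ha p) h (inv_nonneg.2 hp.le)
  rwa [← Real.rpow_mul ha, mul_inv_cancel₀ hp.ne', Real.rpow_one] at this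

lemma aux_le_rpow {p a c : ℝ} (hp : 0 < p) (ha : 0 ≤ a) (hc : 0 ≤ c) (h : a ≤ c ^ p⁻¹) :
    a ^ p ≤ c := by
  have := Real.rpow_le_rpow ha h hp.le
  rwa [← Real.rpow_mul hc, inv_mul_cancel₀ hp.ne', Real.rpow_one] at this

lemma aux_le_of_pos {a : ℝ} {g : ℝ → ℝ} (hg : ContinuousAt g 0) (h : ∀ ε > (0:ℝ), a ≤ g ε) :
    a ≤ g 0 := by
  have ht : Filter.Tendsto g (𝓝[Set.Ioi (0:ℝ)] 0) (𝓝 (g 0)) :=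
    hg.tendsto.mono_left nhdsWithin_le_nhds
  exact ge_of_tendsto ht (eventually_nhdsWithin_of_forall fun ε hε => h ε hε)

lemma aux_cont_rpow (c p : ℝ) (hp : 0 ≤ p) : ContinuousAt (fun ε : ℝ => (c + ε) ^ p) 0 := by
  have h1 : ContinuousAt (fun x : ℝ => x ^ p) (c + 0) :=
    Real.continuousAt_rpow_const _ _ (Or.inr hp)
  exact h1.comp ((continuous_const.add continuous_id).continuousAt)

/-- `cov A` is the intersection of all closed balls containing `A`. -/
def ballCov {X : Type*} [MetricSpace X] (A : Set X) : Set X :=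
  ⋂₀ {B : Set X | (∃ c : X, ∃ r : ℝ, B = Metric.closedBall c r) ∧ A ⊆ B}

lemma mem_ballCov {X : Type*} [MetricSpace X] {A : Set X} {x : X} :
    x ∈ ballCov A ↔ ∀ c r, A ⊆ Metric.closedBall c r → x ∈ Metric.closedBall c r := by
  simp only [ballCov, Set.mem_sInter, Set.mem_setOf_eq]
  constructor
  · intro h c r hs; exact h _ ⟨⟨c, r, rfl⟩, hs⟩
  · rintro h B ⟨⟨c, r, rfl⟩, hs⟩; exact h c r hs

/-- Every complete `p`-uniformly convex space has property (P): given two bounded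
sequences `(x_n)` and `(z_n)`, there is `z ∈ ⋂ n, cov {z_j : j ≥ n}` with
`limsup_n dist z (x_n) ≤ limsup_j limsup_n dist (z_j) (x_n)`. -/
theorem property_P_p_uniformly_convex
    {X : Type*} [MetricSpace X] [CompleteSpace X]
    (p k : ℝ) (hp : 1 ≤ p) (hk : 0 < k)
    (geo : ∀ x y : X, ∃ m : X, dist x m = dist x y / 2 ∧ dist m y = dist x y / 2)
    (puc : ∀ x y z m : X,
      dist x m = dist x y / 2 → dist m y = dist x y / 2 →
      dist z m ^ p ≤ (1 / 2) * dist z x ^ p + (1 / 2) * dist z y ^ p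
        - (k / 8) * dist x y ^ p)
    (xn zn : ℕ → X)
    (hxn : Bornology.IsBounded (Set.range xn))
    (hzn : Bornology.IsBounded (Set.range zn)) :
    ∃ z ∈ ⋂ n : ℕ, ballCov (zn '' {j | n ≤ j}),
      Filter.limsup (fun n => dist z (xn n)) Filter.atTop ≤
        Filter.limsup
          (fun j => Filter.limsup (fun n => dist (zn j) (xn n)) Filter.atTop)
          Filter.atTop := by
  classical
  have hp0 : 0 < p := lt_of_lt_of_le one_pos hp
  set c : X := xn 0 with hcdef
  obtain ⟨R, hR⟩ : ∃ R, Set.range xn ∪ Set.range zn ⊆ Metric.closedBall c R :=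
    (hxn.union hzn).subset_closedBall c
  have hxR : ∀ i, dist (xn i) c ≤ R := fun i =>
    Metric.mem_closedBall.1 (hR (Or.inl ⟨i, rfl⟩))
  have hzR : ∀ j, dist (zn j) c ≤ R := fun j =>
    Metric.mem_closedBall.1 (hR (Or.inr ⟨j, rfl⟩))
  set r : X → ℝ := fun y => limsup (fun i => dist y (xn i)) atTop with hrdef
  have hub : ∀ y i, dist y (xn i) ≤ dist y c + R := fun y i =>
    (dist_triangle y c (xn i)).trans (by
      have := hxR i; rw [dist_comm] at this; linarith)
  have hbd : ∀ y, IsBoundedUnder (· ≤ ·) atTop (fun i => dist y (xn i)) :=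
    fun y => isBoundedUnder_of ⟨dist y c + R, hub y⟩
  have hcb : ∀ y, IsCoboundedUnder (· ≤ ·) atTop (fun i => dist y (xn i)) :=
    fun y => Filter.isCoboundedUnder_le_of_le atTop (x := 0) fun i => dist_nonneg
  have hr0 : ∀ y, 0 ≤ r y := fun y =>
    le_limsup_of_frequently_le
      (Eventually.frequently (Eventually.of_forall fun i => dist_nonneg)) (hbd y)
  have hrev : ∀ y, ∀ ε > (0:ℝ), ∀ᶠ i in atTop, dist y (xn i) < r y + ε := fun y ε hε =>
    eventually_lt_of_limsup_lt (lt_add_of_pos_right _ hε) (hbd y)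
  have hrle : ∀ (y : X) (b : ℝ), (∀ᶠ i in atTop, dist y (xn i) ≤ b) → r y ≤ b :=
    fun y b h => limsup_le_of_le (hcb y) h
  have hlip : ∀ y w : X, r y ≤ r w + dist y w := by
    intro y w
    refine le_of_forall_pos_le_add ?_
    intro ε hε
    have h1 : r y ≤ r w + ε + dist y w := by
      refine hrle y _ ((hrev w ε hε).mono fun i hi => ?_)
      have := dist_triangle y w (xn i)
      linarith
    linarith
  -- the uniform convexity inequality for the asymptotic radius function
  have hFmid : ∀ a b m : X, dist a m = dist a b / 2 → dist m b = dist a b / 2 →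
      r m ^ p ≤ 1/2 * r a ^ p + 1/2 * r b ^ p - k/8 * dist a b ^ p := by
    intro a b m h1 h2
    have key : ∀ ε > (0:ℝ),
        r m ^ p ≤ 1/2 * (r a + ε) ^ p + 1/2 * (r b + ε) ^ p - k/8 * dist a b ^ p := by
      intro ε hε
      set C : ℝ := 1/2 * (r a + ε) ^ p + 1/2 * (r b + ε) ^ p - k/8 * dist a b ^ p with hC
      have hev : ∀ᶠ i in atTop, dist m (xn i) ^ p ≤ C := by
        filter_upwards [hrev a ε hε, hrev b ε hε] with i hia hib
        have hpuc := puc a b (xn i) m h1 h2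
        have e1 : dist (xn i) a ^ p ≤ (r a + ε) ^ p := by
          rw [dist_comm]; exact Real.rpow_le_rpow dist_nonneg hia.le hp0.le
        have e2 : dist (xn i) b ^ p ≤ (r b + ε) ^ p := by
          rw [dist_comm]; exact Real.rpow_le_rpow dist_nonneg hib.le hp0.le
        calc dist m (xn i) ^ p = dist (xn i) m ^ p := by rw [dist_comm]
          _ ≤ (1/2) * dist (xn i) a ^ p + (1/2) * dist (xn i) b ^ p
              - (k/8) * dist a b ^ p := hpuc
          _ ≤ C := by rw [hC]; linarith
      have hC0 : 0 ≤ C := by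
        obtain ⟨i, hi⟩ := hev.exists
        exact le_trans (Real.rpow_nonneg dist_nonneg p) hi
      have hrm : r m ≤ C ^ p⁻¹ :=
        hrle m _ (hev.mono fun i hi => aux_rpow_le hp0 dist_nonneg hi)
      exact aux_le_rpow hp0 (hr0 m) hC0 hrm
    have hcont : ContinuousAt (fun ε : ℝ =>
        1/2 * (r a + ε) ^ p + 1/2 * (r b + ε) ^ p - k/8 * dist a b ^ p) 0 := by
      exact (((aux_cont_rpow (r a) p hp0.le).const_mul (1/2)).add
        ((aux_cont_rpow (r b) p hp0.le).const_mul (1/2))).sub continuousAt_const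
    have := aux_le_of_pos hcont key
    simpa using this
  -- basic facts about ballCov
  have covClosed : ∀ A : Set X, IsClosed (ballCov A) := by
    intro A
    apply isClosed_sInter
    rintro B ⟨⟨cb, rb, rfl⟩, -⟩
    exact Metric.isClosed_closedBall
  have covSubset : ∀ A : Set X, A ⊆ ballCov A := by
    intro A x hx
    rw [mem_ballCov]
    intro cb rb hs
    exact hs hx
  have covMid : ∀ (A : Set X) (a b m : X), a ∈ ballCov A → b ∈ ballCov A →
      dist a m = dist a b / 2 → dist m b = dist a b / 2 → m ∈ ballCov A := by
    intro A a b m ha hb h1 h2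
    rw [mem_ballCov] at ha hb ⊢
    intro cb rb hs
    have ha' : dist a cb ≤ rb := Metric.mem_closedBall.1 (ha cb rb hs)
    have hb' : dist b cb ≤ rb := Metric.mem_closedBall.1 (hb cb rb hs)
    have hrb : 0 ≤ rb := le_trans dist_nonneg ha'
    have hpuc := puc a b cb m h1 h2
    have e1 : dist cb a ^ p ≤ rb ^ p := by
      rw [dist_comm]; exact Real.rpow_le_rpow dist_nonneg ha' hp0.le
    have e2 : dist cb b ^ p ≤ rb ^ p := by
      rw [dist_comm]; exact Real.rpow_le_rpow dist_nonneg hb' hp0.le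
    have hd : 0 ≤ k/8 * dist a b ^ p :=
      mul_nonneg (by positivity) (Real.rpow_nonneg dist_nonneg p)
    have hcm : dist cb m ^ p ≤ rb ^ p := by linarith
    have hle : dist cb m ≤ (rb ^ p) ^ p⁻¹ := aux_rpow_le hp0 dist_nonneg hcm
    rw [← Real.rpow_mul hrb, mul_inv_cancel₀ hp0.ne', Real.rpow_one] at hle
    rw [Metric.mem_closedBall, dist_comm]
    exact hle
  set An : ℕ → Set X := fun n => ballCov (zn '' {j | n ≤ j}) with hAndef
  have hAnmem : ∀ n j, n ≤ j → zn j ∈ An n := fun n j hj => covSubset _ ⟨j, hj, rfl⟩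
  have hAnanti : ∀ n m, n ≤ m → An m ⊆ An n := by
    intro n m hnm x hx
    rw [hAndef] at hx ⊢
    rw [mem_ballCov] at hx ⊢
    intro cb rb hs
    refine hx cb rb ?_
    rintro y ⟨j, hj, rfl⟩
    exact hs ⟨j, le_trans hnm hj, rfl⟩
  set S : ℕ → ℝ := fun n => sInf ((fun y => r y ^ p) '' An n) with hSdef
  have hne : ∀ n, ((fun y => r y ^ p) '' An n).Nonempty :=
    fun n => ⟨r (zn n) ^ p, zn n, hAnmem n n le_rfl, rfl⟩
  have hbdb : ∀ n, BddBelow ((fun y => r y ^ p) '' An n) := by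
    intro n
    refine ⟨0, ?_⟩
    rintro _ ⟨y, -, rfl⟩
    exact Real.rpow_nonneg (hr0 y) p
  have hSle : ∀ n y, y ∈ An n → S n ≤ r y ^ p := fun n y hy => csInf_le (hbdb n) ⟨y, hy, rfl⟩
  have hSmono : Monotone S := fun n m hnm =>
    csInf_le_csInf (hbdb n) (hne m) (Set.image_mono (hAnanti n m hnm))
  set L : ℝ := limsup (fun j => r (zn j)) atTop with hLdef
  have hrzn : ∀ j, r (zn j) ≤ R + R := by
    intro j
    refine hrle _ _ (Eventually.of_forall fun i => ?_)
    have h1 := dist_triangle (zn j) c (xn i)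
    have h2 := hxR i
    rw [dist_comm] at h2
    have := hzR j
    linarith
  have hLbd : IsBoundedUnder (· ≤ ·) atTop (fun j => r (zn j)) :=
    isBoundedUnder_of ⟨R + R, hrzn⟩
  have hL0 : 0 ≤ L := le_limsup_of_frequently_le
    (Eventually.frequently (Eventually.of_forall fun j => hr0 (zn j))) hLbd
  have hSub : ∀ n, S n ≤ L ^ p := by
    intro n
    have key : ∀ ε > (0:ℝ), S n ≤ (L + ε) ^ p := by
      intro ε hε
      have hev : ∀ᶠ j in atTop, r (zn j) < L + ε :=
        eventually_lt_of_limsup_lt (lt_add_of_pos_right _ hε) hLbd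
      obtain ⟨j, hj, hjn⟩ := (hev.and (eventually_ge_atTop n)).exists
      refine le_trans (hSle n (zn j) (hAnmem n j hjn)) ?_
      exact Real.rpow_le_rpow (hr0 _) hj.le hp0.le
    have := aux_le_of_pos (aux_cont_rpow L p hp0.le) key
    simpa using this
  have hSbdd : BddAbove (Set.range S) := ⟨L ^ p, by rintro _ ⟨n, rfl⟩; exact hSub n⟩
  set s : ℝ := ⨆ n, S n with hsdef
  have hSs : ∀ n, S n ≤ s := fun n => le_ciSup hSbdd n
  have hStend : Tendsto S atTop (𝓝 s) := tendsto_atTop_ciSup hSmono hSbdd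
  set δ : ℕ → ℝ := fun n => 1 / ((n : ℝ) + 1) with hδdef
  have hδ0 : ∀ n, 0 < δ n := fun n => by positivity
  have hδanti : ∀ n m, n ≤ m → δ m ≤ δ n := by
    intro n m h
    have h1 : (n : ℝ) + 1 ≤ (m : ℝ) + 1 := by exact_mod_cast Nat.succ_le_succ h
    exact one_div_le_one_div_of_le (by positivity) h1
  have hδtend : Tendsto δ atTop (𝓝 0) := tendsto_one_div_add_atTop_nhds_zero_nat
  have hwex : ∀ n, ∃ y, y ∈ An n ∧ r y ^ p < S n + δ n := by
    intro n
    obtain ⟨_, ⟨y, hy, rfl⟩, hlt⟩ := exists_lt_of_csInf_lt (hne n)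
      (lt_add_of_pos_right (S n) (hδ0 n))
    exact ⟨y, hy, hlt⟩
  choose w hw1 hw2 using hwex
  set B : ℕ → ℝ := fun n => 8 / k * ((s - S n) / 2 + δ n) with hBdef
  have hkey : ∀ n m, n ≤ m → dist (w n) (w m) ^ p ≤ B n := by
    intro n m hnm
    obtain ⟨mid, hm1, hm2⟩ := geo (w n) (w m)
    have hmidA : mid ∈ An n := covMid _ _ _ _ (hw1 n) (hAnanti n m hnm (hw1 m)) hm1 hm2
    have h1 := hFmid (w n) (w m) mid hm1 hm2
    have h2 : S n ≤ r mid ^ p := hSle n mid hmidA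
    have h3 : k / 8 * dist (w n) (w m) ^ p ≤ (S m - S n) / 2 + (δ n + δ m) / 2 := by
      have l1 := hw2 n
      have l2 := hw2 m
      linarith
    have h4 : dist (w n) (w m) ^ p ≤ 8 / k * ((S m - S n) / 2 + (δ n + δ m) / 2) := by
      rw [div_mul_eq_mul_div, le_div_iff₀ hk]
      linarith
    refine h4.trans ?_
    have h5 : (S m - S n) / 2 + (δ n + δ m) / 2 ≤ (s - S n) / 2 + δ n := by
      have := hSs m
      have := hδanti n m hnm
      linarith
    exact mul_le_mul_of_nonneg_left h5 (by positivity)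
  have hB0 : ∀ n, 0 ≤ B n := fun n =>
    le_trans (Real.rpow_nonneg dist_nonneg p) (hkey n n le_rfl)
  have hBanti : ∀ N n, N ≤ n → B n ≤ B N := by
    intro N n h
    refine mul_le_mul_of_nonneg_left ?_ (by positivity)
    have := hSmono h
    have := hδanti N n h
    linarith
  have hdist : ∀ n m N, N ≤ n → N ≤ m → dist (w n) (w m) ≤ B N ^ p⁻¹ := by
    have main : ∀ N n m, N ≤ n → n ≤ m → dist (w n) (w m) ≤ B N ^ p⁻¹ := by
      intro N n m hN hnm
      have h1 : dist (w n) (w m) ≤ B n ^ p⁻¹ := aux_rpow_le hp0 dist_nonneg (hkey n m hnm)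
      exact h1.trans (Real.rpow_le_rpow (hB0 n) (hBanti N n hN) (by positivity))
    intro n m N hn hm
    rcases le_total n m with h | h
    · exact main N n m hn h
    · rw [dist_comm]; exact main N m n hm h
  have hBtend : Tendsto B atTop (𝓝 0) := by
    have h1 : Tendsto (fun n => 8 / k * ((s - S n) / 2 + δ n)) atTop
        (𝓝 (8 / k * ((s - s) / 2 + 0))) :=
      (((tendsto_const_nhds.sub hStend).div_const 2).add hδtend).const_mul _
    simpa using h1
  have hbbtend : Tendsto (fun N => B N ^ p⁻¹) atTop (𝓝 0) := by
    have hc : ContinuousAt (fun x : ℝ => x ^ p⁻¹) 0 :=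
      Real.continuousAt_rpow_const _ _ (Or.inr (by positivity))
    have := hc.tendsto.comp hBtend
    simpa [Function.comp_def, Real.zero_rpow (inv_ne_zero hp0.ne')] using this
  have hcauchy : CauchySeq w :=
    cauchySeq_of_le_tendsto_0 (fun N => B N ^ p⁻¹) hdist hbbtend
  obtain ⟨z, hz⟩ := cauchySeq_tendsto_of_complete hcauchy
  refine ⟨z, ?_, ?_⟩
  · rw [Set.mem_iInter]
    intro n
    have : ∀ᶠ m in atTop, w m ∈ An n :=
      eventually_atTop.2 ⟨n, fun m hm => hAnanti n m hm (hw1 m)⟩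
    exact (covClosed _).mem_of_tendsto hz this
  · have hgoal : ∀ m : ℕ, r z ≤ (L ^ p + δ m) ^ p⁻¹ + dist z (w m) := by
      intro m
      have h1 : r (w m) ^ p ≤ L ^ p + δ m := by
        have := hw2 m
        have := hSub m
        linarith
      have h2 : r (w m) ≤ (L ^ p + δ m) ^ p⁻¹ := aux_rpow_le hp0 (hr0 _) h1
      have h3 := hlip z (w m)
      linarith
    have htend : Tendsto (fun m => (L ^ p + δ m) ^ p⁻¹ + dist z (w m)) atTop
        (𝓝 ((L ^ p + 0) ^ p⁻¹ + 0)) := by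
      have hc : ContinuousAt (fun x : ℝ => (L ^ p + x) ^ p⁻¹) 0 :=
        aux_cont_rpow (L ^ p) p⁻¹ (by positivity)
      have hd : Tendsto (fun m => dist z (w m)) atTop (𝓝 0) := by
        have := tendsto_iff_dist_tendsto_zero.1 hz
        simpa [dist_comm] using this
      exact (hc.tendsto.comp hδtend).add hd
    have hfin : r z ≤ (L ^ p + 0) ^ p⁻¹ + 0 :=
      ge_of_tendsto htend (Eventually.of_forall hgoal)
    have hLp : (L ^ p + 0) ^ p⁻¹ = L := by
      rw [add_zero, ← Real.rpow_mul hL0, mul_inv_cancel₀ hp0.ne', Real.rpow_one]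
    rw [hLp, add_zero] at hfin
    simpa [hrdef, hLdef] using hfin
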